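/- Let R be a commutative ring with 1 ≠ 0, and suppose there exist u, v ∈ R with u ≠ 0 and u·v = 0 and v ≠ 0. Let G be a group containing elements a, b with ab ≠ ba, and suppose the group ring R[G] satisfies ring commutative transitivity restricted away from R (if x commutes with y, y commutes with z, and y ∉ R, then x commutes with z) and satisfies that x² = 0 implies x = 0 for x ∈ R. Then we obtain a contradiction; hence under these hypotheses R is an integral domain. -/

import Mathlib

theorem rct_forces_domain
    {R : Type*} [CommRing R] [Nontrivial R] (u v : R) (hu : u ≠ 0) (hv : v ≠ 0)
    (huv : u * v = 0)
    {G : Type*} [Group G] (a b : G) (hab : a * b ≠ b * a)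
    (hRCT : ∀ x y z : MonoidAlgebra R G,
      y ∉ Set.range (algebraMap R (MonoidAlgebra R G)) →
      x * y = y * x → y * z = z * y → x * z = z * x)
    (hred : ∀ r : R, r ^ 2 = 0 → r = 0) :
    False := by
  have hvu : v * u = 0 := by rw [mul_comm]; exact huv
  have hb1 : b ≠ 1 := by rintro rfl; simp at hab
  set ua := MonoidAlgebra.single a u with hua
  set vb := MonoidAlgebra.single b v with hvb
  set ub := MonoidAlgebra.single b u with hub
  have hns : vb ∉ Set.range (algebraMap R (MonoidAlgebra R G)) := by
    rintro ⟨r, hr⟩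
    have : (MonoidAlgebra.single (1:G) r : MonoidAlgebra R G).coeff b = vb.coeff b := by
      rw [← hr]; rfl
    rw [hvb] at this
    simp [MonoidAlgebra.coeff_single, Finsupp.single_apply, hb1.symm] at this
    exact hv this.symm
  have h1 : ua * vb = vb * ua := by
    rw [hua, hvb, MonoidAlgebra.single_mul_single, MonoidAlgebra.single_mul_single,
      huv, hvu]; simp
  have h2 : vb * ub = ub * vb := by
    rw [hvb, hub, MonoidAlgebra.single_mul_single, MonoidAlgebra.single_mul_single,
      huv, hvu]
  have h3 := hRCT ua vb ub hns h1 h2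
  rw [hua, hub, MonoidAlgebra.single_mul_single, MonoidAlgebra.single_mul_single] at h3
  have := congrArg (fun (f : MonoidAlgebra R G) => f.coeff (a * b)) h3
  simp only [MonoidAlgebra.coeff_single] at this
  rw [Finsupp.single_eq_same, Finsupp.single_eq_of_ne hab] at this
  exact hu (hred u (by rw [pow_two]; exact this))
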